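/- Let f : ℝ^n → ℝ be differentiable with L-Lipschitz gradient (L > 0), whose infimum f* = inf_x f(x) is attained (or finite), and which satisfies the Polyak–Łojasiewicz condition with constant μ > 0: (1/2)‖∇f(x)‖² ≥ μ (f(x) − f*) for all x. Then for every step size η with 0 < η ≤ 2/L, the gradient step x⁺ = x − η ∇f(x) satisfies f(x⁺) − f* ≤ (1 − 2μη(1 − Lη/2)) (f(x) − f*). -/

import Mathlib

open scoped Topology

open InnerProductSpace in
lemma descent_aux {n : ℕ}
    (f : EuclideanSpace ℝ (Fin n) → ℝ) (hf : Differentiable ℝ f)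
    (L : ℝ)
    (hlip : ∀ x y, ‖gradient f x - gradient f y‖ ≤ L * ‖x - y‖)
    (x v : EuclideanSpace ℝ (Fin n)) :
    f (x + v) ≤ f x + ⟪gradient f x, v⟫_ℝ + L / 2 * ‖v‖ ^ 2 := by
  set φ : ℝ → ℝ := fun t => ⟪gradient f (x + t • v), v⟫_ℝ with hφ
  have hg : ∀ t : ℝ, HasDerivAt (fun t : ℝ => f (x + t • v)) (φ t) t := by
    intro t
    have h1 : HasDerivAt (fun t : ℝ => x + t • v) v t := by
      simpa using ((hasDerivAt_id t).smul_const v).const_add x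
    have h2 := ((hf (x + t • v)).hasGradientAt.hasFDerivAt).comp_hasDerivAt t h1
    simp only [hφ, InnerProductSpace.toDual_apply_apply] at h2
    exact h2
  set h : ℝ → ℝ := fun t => f (x + t • v) - t * φ 0 - L * t ^ 2 / 2 * ‖v‖ ^ 2 with hh
  have hd : ∀ t : ℝ, HasDerivAt h (φ t - φ 0 - L * t * ‖v‖ ^ 2) t := by
    intro t
    have := ((hg t).sub ((hasDerivAt_id t).mul_const (φ 0))).sub
      (((hasDerivAt_pow 2 t).const_mul L |>.div_const 2).mul_const (‖v‖ ^ 2))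
    convert this using 1
    · rfl
    · rfl
    · rfl
    · rw [show (2:ℕ) - 1 = 1 from rfl, pow_one]
      push_cast
      ring
  have hdiff : Differentiable ℝ h := fun t => (hd t).differentiableAt
  have hmono : AntitoneOn h (Set.Icc 0 1) := by
    apply antitoneOn_of_deriv_nonpos (convex_Icc 0 1) hdiff.continuous.continuousOn
      (hdiff.differentiableOn)
    intro t ht
    rw [interior_Icc] at ht
    rw [(hd t).deriv]
    have h1 : φ t - φ 0 ≤ L * t * ‖v‖ ^ 2 := by
      have e : φ t - φ 0 = ⟪gradient f (x + t • v) - gradient f (x + (0:ℝ) • v), v⟫_ℝ := by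
        simp [φ, inner_sub_left]
      rw [e]
      calc ⟪gradient f (x + t • v) - gradient f (x + (0:ℝ) • v), v⟫_ℝ
          ≤ ‖gradient f (x + t • v) - gradient f (x + (0:ℝ) • v)‖ * ‖v‖ :=
            real_inner_le_norm _ _
        _ ≤ (L * ‖(x + t • v) - (x + (0:ℝ) • v)‖) * ‖v‖ := by
            gcongr
            exact hlip _ _
        _ = L * t * ‖v‖ ^ 2 := by
            have e2 : (x + t • v) - (x + (0:ℝ) • v) = t • v := by
              simp
            rw [e2, norm_smul, Real.norm_eq_abs, abs_of_pos ht.1]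
            ring
    linarith
  have := hmono (Set.left_mem_Icc.2 one_pos.le) (Set.right_mem_Icc.2 one_pos.le) one_pos.le
  have h0 : h 0 = f x := by simp [h]
  have h1 : h 1 = f (x + v) - φ 0 - L / 2 * ‖v‖ ^ 2 := by simp [h]
  have hφ0 : φ 0 = ⟪gradient f x, v⟫_ℝ := by simp [φ]
  rw [h0, h1, hφ0] at this
  linarith

/-- **One-step contraction of the suboptimality gap under the PL condition.**
If `f : ℝ^n → ℝ` is differentiable with `L`-Lipschitz gradient (`L > 0`), has
finite infimum `fstar`, and satisfies the Polyak–Łojasiewicz condition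
`(1/2)‖∇f(x)‖² ≥ μ (f x - fstar)` with `μ > 0`, then for every step size
`0 < η ≤ 2/L`, the gradient step `x⁺ = x - η ∇f(x)` satisfies
`f x⁺ - fstar ≤ (1 - 2μη(1 - Lη/2)) (f x - fstar)`. -/
theorem pl_gradient_step_contraction {n : ℕ}
    (f : EuclideanSpace ℝ (Fin n) → ℝ) (hf : Differentiable ℝ f)
    (L μ fstar : ℝ) (hL : 0 < L) (hμ : 0 < μ)
    (hlip : ∀ x y, ‖gradient f x - gradient f y‖ ≤ L * ‖x - y‖)
    (hglb : IsGLB (Set.range f) fstar)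
    (hPL : ∀ x, μ * (f x - fstar) ≤ (1 / 2) * ‖gradient f x‖ ^ 2)
    (η : ℝ) (hη0 : 0 < η) (hη : η ≤ 2 / L) :
    ∀ x : EuclideanSpace ℝ (Fin n),
      f (x - η • gradient f x) - fstar ≤
        (1 - 2 * μ * η * (1 - L * η / 2)) * (f x - fstar) := by
  intro x
  have key := descent_aux f hf L hlip x (-(η • gradient f x))
  rw [← sub_eq_add_neg] at key
  have hin : (inner ℝ (gradient f x) (-(η • gradient f x)) : ℝ) = -η * ‖gradient f x‖ ^ 2 := by
    rw [inner_neg_right, real_inner_smul_right, real_inner_self_eq_norm_sq]; ring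
  have hnorm : ‖-(η • gradient f x)‖ ^ 2 = η ^ 2 * ‖gradient f x‖ ^ 2 := by
    rw [norm_neg, norm_smul, mul_pow, Real.norm_eq_abs, sq_abs]
  rw [hin, hnorm] at key
  have hLη : L * η ≤ 2 := by
    have := (le_div_iff₀ hL).mp hη
    linarith
  have hc : 0 ≤ η * (1 - L * η / 2) := by nlinarith
  have hpl := hPL x
  nlinarith [key, hpl, hc, mul_le_mul_of_nonneg_left hpl hc]
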